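/- Let G = (V,E) be a (2,2)-circuit with |V| ≥ 2. Then G contains a vertex of degree 3; moreover, for every vertex v of G of degree 3, the graph G − v obtained by deleting v and all edges incident to it is (2,2)-tight. -/
import Mathlib


/-! ### Multigraphs: finite vertex set `V`, finite edge set `E`; each edge `e` has
endpoints `src e` and `dst e` (loops and parallel edges are allowed). -/

structure Multigraph (V E : Type) where
  src : E → V
  dst : E → V

namespace Multigraph

variable {V E : Type}

/-- `i(X)`: the number of edges both of whose endpoints lie in `X`. -/
def iCount [Fintype E] [DecidableEq V] (G : Multigraph V E) (X : Finset V) : ℕ :=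
  (Finset.univ.filter fun e => G.src e ∈ X ∧ G.dst e ∈ X).card

/-- The degree of a vertex (a loop contributes 2). -/
def degree [Fintype E] [DecidableEq V] (G : Multigraph V E) (v : V) : ℕ :=
  (Finset.univ.filter fun e => G.src e = v).card +
    (Finset.univ.filter fun e => G.dst e = v).card

/-- The set of neighbours of a vertex. -/
def neighborSet (G : Multigraph V E) (v : V) : Set V :=
  {w | ∃ e, (G.src e = v ∧ G.dst e = w) ∨ (G.src e = w ∧ G.dst e = v)}

/-- `(k,ℓ)`-sparsity: `i(X) ≤ k|X| − ℓ` for every `X ⊆ V` spanning at least one edge. -/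
def Sparse [Fintype E] [DecidableEq V] (G : Multigraph V E) (k l : ℤ) : Prop :=
  ∀ X : Finset V, (∃ e, G.src e ∈ X ∧ G.dst e ∈ X) →
    (G.iCount X : ℤ) ≤ k * (X.card : ℤ) - l

/-- `(k,ℓ)`-tightness: `(k,ℓ)`-sparse and `|E| = k|V| − ℓ`. -/
def Tight [Fintype V] [Fintype E] [DecidableEq V] (G : Multigraph V E) (k l : ℤ) : Prop :=
  G.Sparse k l ∧ (Fintype.card E : ℤ) = k * (Fintype.card V : ℤ) - l

/-- Delete a single edge. -/
def deleteEdge (G : Multigraph V E) (e₀ : E) : Multigraph V {e : E // e ≠ e₀} :=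
  ⟨fun e => G.src e.1, fun e => G.dst e.1⟩

/-- Delete a vertex together with all edges incident to it. -/
def deleteVertex (G : Multigraph V E) (v : V) :
    Multigraph {w : V // w ≠ v} {e : E // G.src e ≠ v ∧ G.dst e ≠ v} :=
  ⟨fun e => ⟨G.src e.1, e.2.1⟩, fun e => ⟨G.dst e.1, e.2.2⟩⟩

/-- Add one new edge with endpoints `u` and `w`. -/
def addEdge (G : Multigraph V E) (u w : V) : Multigraph V (E ⊕ Unit) :=
  ⟨Sum.elim G.src fun _ => u, Sum.elim G.dst fun _ => w⟩

/-- The subgraph induced by a set of vertices `X`. -/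
def induce (G : Multigraph V E) (X : Finset V) :
    Multigraph {v : V // v ∈ X} {e : E // G.src e ∈ X ∧ G.dst e ∈ X} :=
  ⟨fun e => ⟨G.src e.1, e.2.1⟩, fun e => ⟨G.dst e.1, e.2.2⟩⟩

/-- `G` is a `P(2,1)`-graph: `(2,1)`-tight and some edge-deleted graph is `(2,2)`-tight. -/
def IsP21 [Fintype V] [Fintype E] [DecidableEq V] [DecidableEq E] (G : Multigraph V E) : Prop :=
  G.Tight 2 1 ∧ ∃ e : E, (G.deleteEdge e).Tight 2 2

/-- `G` is a `(2,2)`-circuit: `|E| = 2|V| − 1` and every edge-deleted graph is `(2,2)`-tight. -/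
def IsCircuit22 [Fintype V] [Fintype E] [DecidableEq V] [DecidableEq E]
    (G : Multigraph V E) : Prop :=
  (Fintype.card E : ℤ) = 2 * (Fintype.card V : ℤ) - 1 ∧
    ∀ e : E, (G.deleteEdge e).Tight 2 2

/-- `X` is an over-critical set (`i(X) = 2|X| − 1`) of minimum cardinality. -/
def IsMinOverCritical [Fintype E] [DecidableEq V] (G : Multigraph V E) (X : Finset V) : Prop :=
  (G.iCount X : ℤ) = 2 * (X.card : ℤ) - 1 ∧
    ∀ Y : Finset V, (G.iCount Y : ℤ) = 2 * (Y.card : ℤ) - 1 → X.card ≤ Y.card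

/-- `G` is (a copy of) `K₂³`: two distinct vertices joined by three parallel edges. -/
def IsK23 [Fintype E] (G : Multigraph V E) : Prop :=
  ∃ a b : V, a ≠ b ∧ (∀ v : V, v = a ∨ v = b) ∧ Fintype.card E = 3 ∧
    ∀ e : E, (G.src e = a ∧ G.dst e = b) ∨ (G.src e = b ∧ G.dst e = a)

/-- Adjacency via an edge belonging to the edge subset `F`. -/
def AdjOn (G : Multigraph V E) (F : Set E) (u w : V) : Prop :=
  ∃ e ∈ F, (G.src e = u ∧ G.dst e = w) ∨ (G.src e = w ∧ G.dst e = u)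

/-- Connectivity of the multigraph. -/
def Connected (G : Multigraph V E) : Prop :=
  Nonempty V ∧ ∀ u w : V, Relation.ReflTransGen (G.AdjOn Set.univ) u w

/-- 2-edge-connectivity: connected, and still connected after deleting any one edge. -/
def TwoEdgeConnected (G : Multigraph V E) : Prop :=
  G.Connected ∧ ∀ e₀ : E, ∀ u w : V, Relation.ReflTransGen (G.AdjOn {e | e ≠ e₀}) u w

/-- Adjacency inside the induced subgraph on the vertex set `X`. -/
def AdjIn (G : Multigraph V E) (X : Set V) (u w : V) : Prop :=
  u ∈ X ∧ w ∈ X ∧ ∃ e, (G.src e = u ∧ G.dst e = w) ∨ (G.src e = w ∧ G.dst e = u)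

/-- Connectivity of the induced subgraph on the vertex set `X`. -/
def ConnectedOn (G : Multigraph V E) (X : Set V) : Prop :=
  ∀ u ∈ X, ∀ w ∈ X, Relation.ReflTransGen (G.AdjIn X) u w

/-- `T` is the edge set of a spanning tree of `G`:
the spanning subgraph with edge set `T` is connected and `|T| = |V| − 1`. -/
def IsSpanningTree [Fintype V] (G : Multigraph V E) (T : Finset E) : Prop :=
  (∀ u w : V, Relation.ReflTransGen (G.AdjOn (T : Set E)) u w) ∧ T.card + 1 = Fintype.card V

/-- `M` is the edge set of a spanning connected map-graph of `G`:
the spanning subgraph with edge set `M` is connected and has exactly `|V|` edges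
(equivalently, it is connected with exactly one cycle). -/
def IsConnectedSpanningMapGraph [Fintype V] (G : Multigraph V E) (M : Finset E) : Prop :=
  (∀ u w : V, Relation.ReflTransGen (G.AdjOn (M : Set E)) u w) ∧ M.card = Fintype.card V

/-- `(X, F)` describes a subgraph of `G`: every edge of `F` has both endpoints in `X`. -/
def IsSubgraphOn (G : Multigraph V E) (X : Finset V) (F : Finset E) : Prop :=
  ∀ e ∈ F, G.src e ∈ X ∧ G.dst e ∈ X

end Multigraph

section Aux

open Finset

lemma card_filter_subtype {E : Type} [Fintype E] (p q : E → Prop) [DecidablePred p]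
    [DecidablePred q] :
    (Finset.univ.filter (fun e : {e : E // p e} => q e.1)).card
      = (Finset.univ.filter (fun e : E => p e ∧ q e)).card := by
  rw [← Fintype.card_subtype, ← Fintype.card_subtype]
  exact Fintype.card_congr (Equiv.subtypeSubtypeEquivSubtypeInter p q)

namespace Multigraph

variable {V E : Type} [Fintype V] [Fintype E] [DecidableEq V] [DecidableEq E]
  (G : Multigraph V E)

lemma stmt11_handshake : ∑ v, G.degree v = 2 * Fintype.card E := by
  unfold Multigraph.degree
  rw [Finset.sum_add_distrib]
  have h1 := (Finset.card_eq_sum_card_fiberwise (f := G.src) (s := univ) (t := univ)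
    (fun e _ => mem_univ _))
  have h2 := (Finset.card_eq_sum_card_fiberwise (f := G.dst) (s := univ) (t := univ)
    (fun e _ => mem_univ _))
  rw [Finset.card_univ] at h1 h2
  omega

lemma stmt11_iCount_deleteEdge (e₀ : E) (X : Finset V) :
    (G.deleteEdge e₀).iCount X
      = (Finset.univ.filter fun e : E => e ≠ e₀ ∧ (G.src e ∈ X ∧ G.dst e ∈ X)).card :=
  card_filter_subtype (fun e => e ≠ e₀) (fun e => G.src e ∈ X ∧ G.dst e ∈ X)

lemma stmt11_iCount_deleteVertex (v : V) (X' : Finset {w : V // w ≠ v}) :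
    (G.deleteVertex v).iCount X'
      = G.iCount (X'.map (Function.Embedding.subtype _)) := by
  set X := X'.map (Function.Embedding.subtype _) with hXdef
  have hX : ∀ x ∈ X, x ≠ v := by
    intro x hx
    rw [hXdef, Finset.mem_map] at hx
    obtain ⟨w, _, rfl⟩ := hx
    exact w.2
  have key : (Finset.univ.filter fun e : {e : E // G.src e ≠ v ∧ G.dst e ≠ v} =>
        ((G.deleteVertex v).src e ∈ X' ∧ (G.deleteVertex v).dst e ∈ X'))
      = Finset.univ.filter fun e : {e : E // G.src e ≠ v ∧ G.dst e ≠ v} =>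
        (G.src e.1 ∈ X ∧ G.dst e.1 ∈ X) := by
    apply Finset.filter_congr
    intro e _
    exact and_congr (Finset.mem_map' _).symm (Finset.mem_map' _).symm
  show (Finset.univ.filter fun e : {e : E // G.src e ≠ v ∧ G.dst e ≠ v} =>
        ((G.deleteVertex v).src e ∈ X' ∧ (G.deleteVertex v).dst e ∈ X')).card = _
  rw [key, card_filter_subtype (fun e => G.src e ≠ v ∧ G.dst e ≠ v)
    (fun e => G.src e ∈ X ∧ G.dst e ∈ X)]
  unfold Multigraph.iCount
  congr 1
  ext e
  simp only [Finset.mem_filter, Finset.mem_univ, true_and]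
  constructor
  · rintro ⟨-, h⟩; exact h
  · intro h; exact ⟨⟨hX _ h.1, hX _ h.2⟩, h⟩

lemma stmt11_card_ne (v : V) : Fintype.card {w : V // w ≠ v} = Fintype.card V - 1 := by
  rw [Fintype.card_subtype]
  have : (univ.filter fun w : V => w ≠ v) = univ.erase v := by
    ext w; simp
  rw [this, Finset.card_erase_of_mem (mem_univ v), Finset.card_univ]

lemma stmt11_card_edges (v : V) :
    Fintype.card {e : E // G.src e ≠ v ∧ G.dst e ≠ v}
      = Fintype.card E - (univ.filter fun e => G.src e = v ∨ G.dst e = v).card := by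
  rw [Fintype.card_subtype]
  have : (univ.filter fun e : E => G.src e ≠ v ∧ G.dst e ≠ v)
      = univ \ (univ.filter fun e => G.src e = v ∨ G.dst e = v) := by
    ext e; simp only [Finset.mem_filter, Finset.mem_univ, true_and, Finset.mem_sdiff]; tauto
  rw [this, Finset.card_sdiff_of_subset (Finset.filter_subset _ _), Finset.card_univ]

variable {G}

lemma stmt11_noloops (hG : G.IsCircuit22) (hV : 2 ≤ Fintype.card V) :
    ∀ f, G.src f ≠ G.dst f := by
  intro f hf
  have hE : 1 < Fintype.card E := by
    have h1 := hG.1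
    have h2 : (2 : ℤ) ≤ (Fintype.card V : ℤ) := by exact_mod_cast hV
    omega
  obtain ⟨e, he⟩ := Fintype.exists_ne_of_one_lt_card hE f
  have hsp := (hG.2 e).1 {G.src f}
    ⟨⟨f, Ne.symm he⟩, by simp [Multigraph.deleteEdge, ← hf]⟩
  have hmem : (⟨f, Ne.symm he⟩ : {x : E // x ≠ e}) ∈ (Finset.univ.filter fun e' =>
      (G.deleteEdge e).src e' ∈ ({G.src f} : Finset V) ∧
      (G.deleteEdge e).dst e' ∈ ({G.src f} : Finset V)) := by
    simp [Multigraph.deleteEdge, ← hf]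
  have hpos : 0 < (G.deleteEdge e).iCount {G.src f} :=
    Finset.card_pos.mpr ⟨_, hmem⟩
  rw [Finset.card_singleton] at hsp
  omega

lemma stmt11_S_card (hG : G.IsCircuit22) (hV : 2 ≤ Fintype.card V) (v : V) :
    3 ≤ (univ.filter fun e => G.src e = v ∨ G.dst e = v).card := by
  by_contra hS3
  push_neg at hS3
  set S := univ.filter fun e : E => G.src e = v ∨ G.dst e = v with hSdef
  set T := univ.filter fun e : E => G.src e ≠ v ∧ G.dst e ≠ v with hTdef
  have hTcard : T.card = Fintype.card E - S.card := by
    have : T = univ \ S := by ext e; simp only [hSdef, hTdef, Finset.mem_filter, Finset.mem_univ, true_and, Finset.mem_sdiff]; tauto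
    rw [this, Finset.card_sdiff_of_subset (Finset.filter_subset _ _), Finset.card_univ]
  have hEn : Fintype.card E + 1 = 2 * Fintype.card V := by
    have := hG.1; omega
  have hex : ∃ e₀ : E, 2 * Fintype.card V - 3 ≤ (T.erase e₀).card := by
    by_cases hS : S.Nonempty
    · obtain ⟨e, he⟩ := hS
      refine ⟨e, ?_⟩
      rw [Finset.erase_eq_of_notMem]
      · omega
      · simp only [hSdef, Finset.mem_filter, Finset.mem_univ, true_and] at he
        simp only [hTdef, Finset.mem_filter, Finset.mem_univ, true_and]
        tauto
    · have hS0 : S.card = 0 := by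
        rw [Finset.card_eq_zero]; exact Finset.not_nonempty_iff_eq_empty.mp hS
      have hEpos : 0 < Fintype.card E := by omega
      obtain ⟨e⟩ := Fintype.card_pos_iff.mp hEpos
      refine ⟨e, ?_⟩
      have := Finset.pred_card_le_card_erase (s := T) (a := e)
      omega
  obtain ⟨e₀, he₀⟩ := hex
  have hic : (G.deleteEdge e₀).iCount (univ.erase v) = (T.erase e₀).card := by
    rw [stmt11_iCount_deleteEdge]
    congr 1
    ext e
    simp only [Finset.mem_filter, Finset.mem_univ, true_and, Finset.mem_erase, hTdef]
    tauto
  have hwit : ∃ e : {x : E // x ≠ e₀}, (G.deleteEdge e₀).src e ∈ univ.erase v ∧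
      (G.deleteEdge e₀).dst e ∈ univ.erase v := by
    have hpos : 0 < (T.erase e₀).card := by omega
    obtain ⟨f, hf⟩ := Finset.card_pos.mp hpos
    rw [Finset.mem_erase, hTdef, Finset.mem_filter] at hf
    exact ⟨⟨f, hf.1⟩, by simp [Multigraph.deleteEdge, hf.2.2.1, hf.2.2.2]⟩
  have hsp := (hG.2 e₀).1 (univ.erase v) hwit
  rw [hic] at hsp
  rw [Finset.card_erase_of_mem (mem_univ v), Finset.card_univ] at hsp
  have hV' : (2 : ℤ) ≤ (Fintype.card V : ℤ) := by exact_mod_cast hV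
  omega

lemma stmt11_degree_ge (hG : G.IsCircuit22) (hV : 2 ≤ Fintype.card V) (v : V) :
    3 ≤ G.degree v := by
  refine le_trans (stmt11_S_card hG hV v) ?_
  rw [Multigraph.degree, Finset.filter_or]
  exact Finset.card_union_le _ _

end Multigraph

end Aux

/-- A `(2,2)`-circuit with at least two vertices contains a vertex of
degree 3, and deleting any degree-3 vertex yields a `(2,2)`-tight graph. -/
theorem statement_11 {V E : Type} [Fintype V] [Fintype E] [DecidableEq V] [DecidableEq E]
    (G : Multigraph V E) (hG : G.IsCircuit22) (hV : 2 ≤ Fintype.card V) :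
    (∃ v : V, G.degree v = 3) ∧
      ∀ v : V, G.degree v = 3 → (G.deleteVertex v).Tight 2 2 := by
  have hnl := Multigraph.stmt11_noloops hG hV
  have hEn : Fintype.card E + 1 = 2 * Fintype.card V := by have := hG.1; omega
  have hScard : ∀ v : V,
      (Finset.univ.filter fun e => G.src e = v ∨ G.dst e = v).card = G.degree v := by
    intro v
    rw [Multigraph.degree, Finset.filter_or, Finset.card_union_of_disjoint]
    rw [Finset.disjoint_left]
    intro e h1 h2
    simp only [Finset.mem_filter, Finset.mem_univ, true_and] at h1 h2
    exact hnl e (h1.trans h2.symm)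
  constructor
  · by_contra h
    push_neg at h
    have h4 : ∀ v : V, 4 ≤ G.degree v := fun v => by
      have h1 := Multigraph.stmt11_degree_ge hG hV v
      have h2 := h v
      omega
    have hsum : 4 * Fintype.card V ≤ ∑ v, G.degree v := by
      calc 4 * Fintype.card V = (Finset.univ : Finset V).card • 4 := by
            rw [Finset.card_univ, smul_eq_mul]; ring
        _ ≤ ∑ v, G.degree v := Finset.card_nsmul_le_sum _ _ _ (fun v _ => h4 v)
    have hhs := G.stmt11_handshake
    omega
  · intro v hv
    have hS3 : (Finset.univ.filter fun e => G.src e = v ∨ G.dst e = v).card = 3 := by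
      rw [hScard v, hv]
    constructor
    · rintro X' ⟨ff, hesrc, hedst⟩
      set X := X'.map (Function.Embedding.subtype _) with hXdef
      have hX : ∀ x ∈ X, x ≠ v := by
        intro x hx
        rw [hXdef, Finset.mem_map] at hx
        obtain ⟨w, _, rfl⟩ := hx
        exact w.2
      obtain ⟨e, he⟩ := Finset.card_pos.mp (by omega :
        0 < (Finset.univ.filter fun e => G.src e = v ∨ G.dst e = v).card)
      simp only [Finset.mem_filter, Finset.mem_univ, true_and] at he
      have hfsrc : G.src ff.1 ∈ X := (Finset.mem_map' _).mpr hesrc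
      have hfdst : G.dst ff.1 ∈ X := (Finset.mem_map' _).mpr hedst
      have hfe : ff.1 ≠ e := by
        intro hh
        rcases he with h | h
        · exact ff.2.1 (hh ▸ h)
        · exact ff.2.2 (hh ▸ h)
      have hsp := (hG.2 e).1 X ⟨⟨ff.1, hfe⟩, hfsrc, hfdst⟩
      have hic : (G.deleteEdge e).iCount X = G.iCount X := by
        rw [G.stmt11_iCount_deleteEdge]
        unfold Multigraph.iCount
        congr 1
        ext e'
        simp only [Finset.mem_filter, Finset.mem_univ, true_and]
        constructor
        · rintro ⟨-, hh⟩; exact hh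
        · intro hh
          refine ⟨fun heq => ?_, hh⟩
          rcases he with h | h
          · exact hX _ hh.1 (heq ▸ h)
          · exact hX _ hh.2 (heq ▸ h)
      rw [hic] at hsp
      have h1 : (G.deleteVertex v).iCount X' = G.iCount X := G.stmt11_iCount_deleteVertex v X'
      have hcard : X'.card = X.card := (Finset.card_map _).symm
      rw [h1, hcard]
      exact hsp
    · have h1 := G.stmt11_card_edges v
      have h2 := Multigraph.stmt11_card_ne (V := V) v
      show (Fintype.card {e : E // G.src e ≠ v ∧ G.dst e ≠ v} : ℤ) = _
      rw [h1, h2, hS3]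
      have h3 : 3 ≤ Fintype.card E := by
        have := Multigraph.stmt11_S_card hG hV v
        have h4 := Finset.card_filter_le (Finset.univ : Finset E)
          (fun e => G.src e = v ∨ G.dst e = v)
        omega
      push_cast [Nat.cast_sub]
      omega
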